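/- For any nonzero a ∈ ℂ, the ℂ-subalgebra A_a of the rational function field ℂ(z) generated by the elements (z^2 - a^2)^k and z(z^2 - a^2)^k for all k ∈ ℤ equals ℂ[z, (z-a)^{-1}, (z+a)^{-1}], and A_a is isomorphic as a ℂ-algebra to R, via the assignment z ↦ a(1 + t + u), (z + a)^{-1} ↦ (t + 2 - u)/(4a), (z - a)^{-1} ↦ (t^{-1}u - 1)/(4a). -/

import Mathlib

noncomputable section

set_option synthInstance.maxHeartbeats 1000000
set_option maxHeartbeats 1000000

open Polynomial

/-- The polynomial `u² - (t² + 4t)` over the Laurent polynomial ring `ℂ[t,t⁻¹]`. -/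
def threePoly : Polynomial (LaurentPolynomial ℂ) :=
  Polynomial.X ^ 2 - Polynomial.C (LaurentPolynomial.T 2 + 4 * LaurentPolynomial.T 1)

/-- The three-point ring `R = ℂ[t, t⁻¹, u | u² = t² + 4t]`. -/
abbrev R3 : Type := AdjoinRoot threePoly

/-- `t^k` in `R3`, for `k : ℤ`. -/
def tp (k : ℤ) : R3 := AdjoinRoot.of threePoly (LaurentPolynomial.T k)

/-- the element `t` of `R`. -/
def tR : R3 := tp 1

/-- the element `t⁻¹` of `R`. -/
def tInv : R3 := tp (-1)

/-- the element `u` of `R`. -/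
def uR : R3 := AdjoinRoot.root threePoly

/-- For `a : ℂ`, the `ℂ`-subalgebra of `ℂ(z)` generated by the elements `(z² - a²)^k` and
`z(z² - a²)^k` for all `k : ℤ`. -/
def Aa (a : ℂ) : Subalgebra ℂ (RatFunc ℂ) :=
  Algebra.adjoin ℂ
    {x : RatFunc ℂ | ∃ k : ℤ, x = (RatFunc.X ^ 2 - RatFunc.C (a ^ 2)) ^ k ∨
      x = RatFunc.X * (RatFunc.X ^ 2 - RatFunc.C (a ^ 2)) ^ k}

namespace Three

variable (a : ℂ) (ha : a ≠ 0)

def Wm : RatFunc ℂ := RatFunc.X - RatFunc.C a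
def Wp : RatFunc ℂ := RatFunc.X + RatFunc.C a
def Dz : RatFunc ℂ := RatFunc.C (2*a) * Wp a
def Tz : RatFunc ℂ := (Wm a)^2 / Dz a
def Uz : RatFunc ℂ := (Wm a * (RatFunc.X + RatFunc.C (3*a))) / Dz a

lemma hCne {c : ℂ} (hc : c ≠ 0) : RatFunc.C c ≠ 0 := by
  rw [← RatFunc.algebraMap_C]
  exact RatFunc.algebraMap_ne_zero (by simpa using hc)

lemma hWm : Wm a ≠ 0 := by
  have h : algebraMap ℂ[X] (RatFunc ℂ) (Polynomial.X - Polynomial.C a) = Wm a := by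
    simp [Wm, map_sub, RatFunc.algebraMap_X, RatFunc.algebraMap_C]
  rw [← h]
  exact RatFunc.algebraMap_ne_zero (X_sub_C_ne_zero a)

lemma hWp : Wp a ≠ 0 := by
  have h : algebraMap ℂ[X] (RatFunc ℂ) (Polynomial.X - Polynomial.C (-a)) = Wp a := by
    simp [Wp, map_sub, RatFunc.algebraMap_X, RatFunc.algebraMap_C, sub_neg_eq_add]
  rw [← h]
  exact RatFunc.algebraMap_ne_zero (X_sub_C_ne_zero (-a))

include ha in
lemma hDz : Dz a ≠ 0 := mul_ne_zero (hCne (by simpa using ha)) (hWp a)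

include ha in
lemma hTz : Tz a ≠ 0 := div_ne_zero (pow_ne_zero _ (hWm a)) (hDz a ha)

lemma hC3 : RatFunc.C (3*a) = 3 * RatFunc.C a := by rw [map_mul, map_ofNat]
lemma hC2 : RatFunc.C (2*a) = 2 * RatFunc.C a := by rw [map_mul, map_ofNat]
lemma hC4 : RatFunc.C (4*a) = 4 * RatFunc.C a := by rw [map_mul, map_ofNat]
lemma hC3' : (RatFunc.C 3 : RatFunc ℂ) = 3 := map_ofNat _ 3
lemma hC2' : (RatFunc.C 2 : RatFunc ℂ) = 2 := map_ofNat _ 2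
lemma hC4' : (RatFunc.C 4 : RatFunc ℂ) = 4 := map_ofNat _ 4

include ha in
lemma hCa : RatFunc.C a ≠ 0 := hCne ha

include ha in
lemma hU2 : Uz a ^ 2 = Tz a ^ 2 + 4 * Tz a := by
  have hd := hDz a ha
  rw [Uz, Tz]
  field_simp
  simp only [Dz, Wp, Wm, hC2, hC3, hC2', hC3', hC4', map_ofNat]
  ring

include ha in
lemma hz : RatFunc.C a * (1 + Tz a + Uz a) = RatFunc.X := by
  have hd := hDz a ha
  rw [Uz, Tz]
  field_simp
  simp only [Dz, Wp, Wm, hC2, hC3, hC2', hC3', hC4', map_ofNat]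
  ring

include ha in
lemma hinvp' : Tz a + 2 - Uz a = RatFunc.C (4*a) / Wp a := by
  have hd := hDz a ha
  have hwp := hWp a
  rw [Uz, Tz, hC4]
  field_simp
  simp only [Dz, Wp, Wm, hC2, hC3, hC2', hC3', hC4', map_ofNat]
  ring

include ha in
lemma hinvm' : (Tz a)⁻¹ * Uz a - 1 = RatFunc.C (4*a) / Wm a := by
  have hd := hDz a ha
  have hwm := hWm a
  rw [Uz, Tz, hC4, inv_div]
  field_simp
  simp only [Dz, Wp, Wm, hC2, hC3, hC2', hC3', hC4', map_ofNat]
  ring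

include ha in
lemma hC4a : RatFunc.C (4*a) ≠ 0 := hCne (by simpa using ha)

include ha in
lemma hinvp : RatFunc.C (4*a)⁻¹ * (Tz a + 2 - Uz a) = (Wp a)⁻¹ := by
  rw [hinvp' a ha, map_inv₀, div_eq_mul_inv, ← mul_assoc, inv_mul_cancel₀ (hC4a a ha), one_mul]

include ha in
lemma hinvm : RatFunc.C (4*a)⁻¹ * ((Tz a)⁻¹ * Uz a - 1) = (Wm a)⁻¹ := by
  rw [hinvm' a ha, map_inv₀, div_eq_mul_inv, ← mul_assoc, inv_mul_cancel₀ (hC4a a ha), one_mul]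

include ha in
lemma transTz : Transcendental ℂ (Tz a) := by
  rw [transcendental_iff]
  intro p hp
  by_contra hp0
  set n := p.natDegree with hn
  set G : ℕ → ℂ[X] := fun i => Polynomial.C (p.coeff i * (2*a)^(n-i)) *
    ((Polynomial.X - Polynomial.C a)^(2*i) * (Polynomial.X + Polynomial.C a)^(n-i)) with hG
  have key : algebraMap ℂ[X] (RatFunc ℂ) (∑ i ∈ Finset.range (n+1), G i) = 0 := by
    have h1 : Polynomial.aeval (Tz a) p = ∑ i ∈ Finset.range (n+1), p.coeff i • Tz a ^ i :=
      Polynomial.aeval_eq_sum_range _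
    have h2 : (∑ i ∈ Finset.range (n+1), p.coeff i • Tz a ^ i) * Dz a ^ n = 0 := by
      rw [← h1, hp, zero_mul]
    rw [Finset.sum_mul] at h2
    rw [map_sum, ← h2]
    apply Finset.sum_congr rfl
    intro i hi
    have hi' : i ≤ n := Nat.lt_succ_iff.mp (Finset.mem_range.mp hi)
    rw [Algebra.smul_def, RatFunc.algebraMap_eq_C]
    simp only [hG, map_mul, map_pow, map_sub, map_add, RatFunc.algebraMap_C,
      RatFunc.algebraMap_X, map_ofNat]
    rw [show Dz a ^ n = Dz a ^ i * Dz a ^ (n-i) from by rw [← pow_add]; congr 1; omega]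
    rw [Tz, div_pow]
    have hstep : ((Wm a ^ 2) ^ i / Dz a ^ i) * (Dz a ^ i * Dz a ^ (n-i))
        = (Wm a ^ 2) ^ i * Dz a ^ (n-i) := by
      rw [div_mul_eq_mul_div, mul_comm (Dz a ^ i), ← mul_assoc, mul_div_assoc,
        div_self (pow_ne_zero i (hDz a ha)), mul_one]
    have hDsplit : Dz a = 2 * RatFunc.C a * Wp a := by
      rw [Dz, map_mul, map_ofNat]
    conv_rhs => rw [mul_assoc, hstep, ← pow_mul, hDsplit, mul_pow, mul_pow]
    rw [Wp, Wm]
    ring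
  have P0 : (∑ i ∈ Finset.range (n+1), G i) = 0 :=
    RatFunc.algebraMap_injective ℂ (by rw [key, map_zero])
  have hcoeff := congrArg (fun q => Polynomial.coeff q (2*n)) P0
  simp only [Polynomial.finset_sum_coeff, Polynomial.coeff_zero] at hcoeff
  rw [Finset.sum_eq_single_of_mem n (Finset.self_mem_range_succ n)] at hcoeff
  · rw [hG] at hcoeff
    simp only [Nat.sub_self, pow_zero, mul_one, coeff_C_mul] at hcoeff
    have hm : ((Polynomial.X - Polynomial.C a)^(2*n)).Monic := (monic_X_sub_C a).pow _
    have hd : ((Polynomial.X - Polynomial.C a)^(2*n)).natDegree = 2*n := by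
      rw [natDegree_pow, natDegree_X_sub_C, mul_one]
    have h1 := hm.coeff_natDegree
    rw [hd] at h1
    rw [h1, mul_one] at hcoeff
    exact (Polynomial.leadingCoeff_ne_zero.mpr hp0) hcoeff
  · intro i hi hne
    have hi' : i ≤ n := Nat.lt_succ_iff.mp (Finset.mem_range.mp hi)
    have hilt : i < n := lt_of_le_of_ne hi' hne
    rw [hG]
    have hm1 : ((Polynomial.X - Polynomial.C a)^(2*i) * (Polynomial.X + Polynomial.C a)^(n-i)).Monic :=
      ((monic_X_sub_C a).pow _).mul ((monic_X_add_C a).pow _)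
    have hdeg : ((Polynomial.X - Polynomial.C a)^(2*i) * (Polynomial.X + Polynomial.C a)^(n-i)).natDegree
        = 2*i + (n-i) := by
      rw [((monic_X_sub_C a).pow _).natDegree_mul ((monic_X_add_C a).pow _), natDegree_pow,
        natDegree_pow, natDegree_X_sub_C, natDegree_X_add_C, mul_one, mul_one]
    have hz0 : ((Polynomial.X - Polynomial.C a)^(2*i) * (Polynomial.X + Polynomial.C a)^(n-i)).coeff (2*n) = 0 :=
      coeff_eq_zero_of_natDegree_lt (by rw [hdeg]; omega)
    rw [coeff_C_mul, hz0, mul_zero]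

def TzU : (RatFunc ℂ)ˣ := Units.mk0 (Tz a) (hTz a ha)

def lhom : LaurentPolynomial ℂ →ₐ[ℂ] RatFunc ℂ :=
  AddMonoidAlgebra.lift ℂ (RatFunc ℂ) ℤ
    ((Units.coeHom (RatFunc ℂ)).comp (zpowersHom (RatFunc ℂ)ˣ (TzU a ha)))

lemma lhom_T (k : ℤ) : lhom a ha (LaurentPolynomial.T k) = Tz a ^ k := by
  have h : LaurentPolynomial.T k = AddMonoidAlgebra.single k (1:ℂ) := rfl
  rw [h, lhom, AddMonoidAlgebra.lift_single]
  simp only [one_smul]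
  have h2 : (zpowersHom (RatFunc ℂ)ˣ (TzU a ha)) (Multiplicative.ofAdd k) = (TzU a ha)^k := rfl
  simp [h2, TzU]

lemma lhom_toLaurent (p : ℂ[X]) :
    lhom a ha (Polynomial.toLaurent p) = Polynomial.aeval (Tz a) p := by
  rw [← Polynomial.toLaurentAlg_apply]
  have h : (lhom a ha).comp Polynomial.toLaurentAlg = Polynomial.aeval (Tz a) := by
    apply Polynomial.algHom_ext
    simp [Polynomial.toLaurentAlg_apply, Polynomial.toLaurent_X, lhom_T a ha 1]
  exact congrFun (congrArg DFunLike.coe h) p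

lemma heval : Polynomial.eval₂ (lhom a ha).toRingHom (Uz a) threePoly = 0 := by
  simp only [threePoly, eval₂_sub, eval₂_pow, eval₂_X, eval₂_C]
  have h : (lhom a ha).toRingHom (LaurentPolynomial.T 2 + 4 * LaurentPolynomial.T 1)
      = Tz a ^ (2:ℤ) + 4 * Tz a ^ (1:ℤ) := by
    simp only [map_add, map_mul, AlgHom.toRingHom_eq_coe, RingHom.coe_coe]
    rw [lhom_T a ha 2, lhom_T a ha 1, map_ofNat]
  rw [h, hU2 a ha]
  ring_nf
  simp [zpow_two]

def psi : R3 →ₐ[ℂ] RatFunc ℂ :=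
  { AdjoinRoot.lift (lhom a ha).toRingHom (Uz a) (heval a ha) with
    commutes' := by
      intro c
      have h1 : algebraMap ℂ R3 c = AdjoinRoot.of threePoly (algebraMap ℂ (LaurentPolynomial ℂ) c) := by
        rfl
      simp only [RingHom.toMonoidHom_eq_coe, OneHom.toFun_eq_coe, MonoidHom.toOneHom_coe,
        MonoidHom.coe_coe, h1, AdjoinRoot.lift_of]
      exact (lhom a ha).commutes c }

lemma psi_tp (k : ℤ) : psi a ha (tp k) = Tz a ^ k := by
  show AdjoinRoot.lift (lhom a ha).toRingHom (Uz a) (heval a ha) (tp k) = _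
  rw [tp, AdjoinRoot.lift_of]
  exact lhom_T a ha k

lemma psi_u : psi a ha uR = Uz a := by
  show AdjoinRoot.lift (lhom a ha).toRingHom (Uz a) (heval a ha) uR = _
  rw [uR, AdjoinRoot.lift_root]

lemma poly_no_sqrt (p0 p1 : ℂ[X]) (n0 n1 : ℕ)
    (h : p0^2 * Polynomial.X^(2*n1) = p1^2 * Polynomial.X^(2*n0) * (Polynomial.X^2 + 4*Polynomial.X)) :
    p0 = 0 ∧ p1 = 0 := by
  have hX : (Polynomial.X : ℂ[X]) ≠ 0 := X_ne_zero
  have hC4 : (Polynomial.C (-4:ℂ)) = -4 := by rw [map_neg, map_ofNat]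
  have hq : (Polynomial.X^2 + 4*Polynomial.X : ℂ[X]) = Polynomial.X * (Polynomial.X - Polynomial.C (-4)) := by
    rw [hC4]; ring
  have hq0 : (Polynomial.X^2 + 4*Polynomial.X : ℂ[X]) ≠ 0 := by
    rw [hq]; exact mul_ne_zero hX (X_sub_C_ne_zero (-4))
  by_cases hp1 : p1 = 0
  · subst hp1
    simp only [ne_eq, OfNat.ofNat_ne_zero, not_false_eq_true, zero_pow, zero_mul] at h
    rcases mul_eq_zero.mp h with h' | h'
    · exact ⟨pow_eq_zero_iff (by norm_num) |>.mp h', rfl⟩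
    · exact absurd h' (pow_ne_zero _ hX)
  · exfalso
    have hp0 : p0 ≠ 0 := by
      intro h0
      rw [h0] at h
      simp only [ne_eq, OfNat.ofNat_ne_zero, not_false_eq_true, zero_pow, zero_mul] at h
      exact (mul_ne_zero (mul_ne_zero (pow_ne_zero _ hp1) (pow_ne_zero _ hX)) hq0) h.symm
    have hRne : p1^2 * Polynomial.X^(2*n0) * (Polynomial.X^2 + 4*Polynomial.X) ≠ 0 :=
      mul_ne_zero (mul_ne_zero (pow_ne_zero _ hp1) (pow_ne_zero _ hX)) hq0
    have hLne : p0^2 * Polynomial.X^(2*n1) ≠ 0 :=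
      mul_ne_zero (pow_ne_zero _ hp0) (pow_ne_zero _ hX)
    have hmX : ∀ k : ℕ, rootMultiplicity (-4:ℂ) (Polynomial.X ^ k) = 0 := by
      intro k
      apply rootMultiplicity_eq_zero
      simp [IsRoot]
    have hm2 : ∀ q : ℂ[X], q ≠ 0 → rootMultiplicity (-4:ℂ) (q^2) = 2 * rootMultiplicity (-4:ℂ) q := by
      intro q hqne
      rw [pow_two, rootMultiplicity_mul (mul_ne_zero hqne hqne)]; ring
    have hcongr := congrArg (rootMultiplicity (-4:ℂ)) h
    rw [rootMultiplicity_mul hLne, rootMultiplicity_mul hRne, rootMultiplicity_mul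
      (mul_ne_zero (pow_ne_zero _ hp1) (pow_ne_zero _ hX)), hm2 _ hp0, hm2 _ hp1, hmX, hmX] at hcongr
    have hlast : rootMultiplicity (-4:ℂ) (Polynomial.X^2 + 4*Polynomial.X) = 1 := by
      rw [hq, rootMultiplicity_mul (by rw [← hq]; exact hq0),
        rootMultiplicity_eq_zero (by simp [IsRoot]), rootMultiplicity_X_sub_C_self, zero_add]
    rw [hlast] at hcongr
    omega

lemma threePoly_monic : threePoly.Monic := by
  apply Polynomial.monic_X_pow_sub_C _ (two_ne_zero)

include ha in
lemma psi_inj : Function.Injective (psi a ha) := by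
  rw [injective_iff_map_eq_zero]
  intro x hx
  obtain ⟨f, rfl⟩ := AdjoinRoot.mk_surjective x
  set r := f %ₘ threePoly with hrdef
  have hmk : AdjoinRoot.mk threePoly r = AdjoinRoot.mk threePoly f := by
    conv_rhs => rw [← Polynomial.modByMonic_add_div f threePoly]
    rw [map_add, map_mul, AdjoinRoot.mk_self, zero_mul, add_zero]
  rw [← hmk] at hx ⊢
  have h2 : threePoly.degree = 2 := by
    rw [threePoly]; exact Polynomial.degree_X_pow_sub_C (by norm_num) _
  have hlt : r.degree < 2 := h2 ▸ Polynomial.degree_modByMonic_lt f threePoly_monic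
  have hdeg : r.degree ≤ 1 := Order.le_of_lt_succ (by exact_mod_cast hlt)
  have hr : r = Polynomial.C (r.coeff 1) * Polynomial.X + Polynomial.C (r.coeff 0) :=
    Polynomial.eq_X_add_C_of_degree_le_one hdeg
  have hx' : lhom a ha (r.coeff 1) * Uz a + lhom a ha (r.coeff 0) = 0 := by
    have hlift : psi a ha (AdjoinRoot.mk threePoly r)
        = Polynomial.eval₂ (lhom a ha).toRingHom (Uz a) r := AdjoinRoot.lift_mk (heval a ha) r
    rw [hlift] at hx
    conv_lhs at hx => rw [hr]
    simpa [eval₂_add, eval₂_mul, eval₂_C, eval₂_X] using hx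
  obtain ⟨n1, p1, hp1⟩ := LaurentPolynomial.exists_T_pow (r.coeff 1)
  obtain ⟨n0, p0, hp0⟩ := LaurentPolynomial.exists_T_pow (r.coeff 0)
  have e1 : lhom a ha (r.coeff 1) * Tz a ^ (n1:ℤ) = Polynomial.aeval (Tz a) p1 := by
    rw [← lhom_T a ha (n1:ℤ), ← map_mul, ← hp1, lhom_toLaurent]
  have e0 : lhom a ha (r.coeff 0) * Tz a ^ (n0:ℤ) = Polynomial.aeval (Tz a) p0 := by
    rw [← lhom_T a ha (n0:ℤ), ← map_mul, ← hp0, lhom_toLaurent]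
  have hTzpow : ∀ m : ℕ, Tz a ^ (m:ℤ) = Tz a ^ m := fun m => zpow_natCast _ m
  have key : Polynomial.aeval (Tz a) p1 * Tz a ^ n0 * Uz a
      = - (Polynomial.aeval (Tz a) p0 * Tz a ^ n1) := by
    rw [← e1, ← e0, ← hTzpow, ← hTzpow]
    linear_combination (Tz a ^ (n0:ℤ) * Tz a ^ (n1:ℤ)) * hx'
  have key2 : Polynomial.aeval (Tz a) (p0^2 * Polynomial.X^(2*n1))
      = Polynomial.aeval (Tz a) (p1^2 * Polynomial.X^(2*n0) * (Polynomial.X^2 + 4*Polynomial.X)) := by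
    have hsq := congrArg (fun y => y * y) key
    have hU2' := hU2 a ha
    simp only [map_mul, map_pow, map_add, Polynomial.aeval_X, map_ofNat]
    linear_combination (-1 : RatFunc ℂ) * hsq
      + (Polynomial.aeval (Tz a) p1)^2 * Tz a^(2*n0) * hU2'
  have hQ : p0^2 * Polynomial.X^(2*n1)
      = p1^2 * Polynomial.X^(2*n0) * (Polynomial.X^2 + 4*Polynomial.X) := by
    have htr := transTz a ha
    rw [transcendental_iff] at htr
    have := htr (p0^2 * Polynomial.X^(2*n1)
      - p1^2 * Polynomial.X^(2*n0) * (Polynomial.X^2 + 4*Polynomial.X))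
      (by rw [map_sub, key2, sub_self])
    exact sub_eq_zero.mp this
  obtain ⟨hq0, hq1⟩ := poly_no_sqrt p0 p1 n0 n1 hQ
  have hc1 : r.coeff 1 = 0 := by
    have : Polynomial.toLaurent p1 = 0 := by rw [hq1, map_zero]
    rw [hp1] at this
    exact ((LaurentPolynomial.isUnit_T (n1:ℤ)).mul_left_eq_zero).mp this
  have hc0 : r.coeff 0 = 0 := by
    have : Polynomial.toLaurent p0 = 0 := by rw [hq0, map_zero]
    rw [hp0] at this
    exact ((LaurentPolynomial.isUnit_T (n0:ℤ)).mul_left_eq_zero).mp this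
  have : r = 0 := by rw [hr, hc1, hc0]; simp
  rw [this, map_zero]

lemma tp_mul (m n : ℤ) : tp (m + n) = tp m * tp n := by
  rw [tp, tp, tp, LaurentPolynomial.T_add, map_mul]

lemma tp_mem {S : Subalgebra ℂ R3} (h1 : tR ∈ S) (h2 : tInv ∈ S) : ∀ k : ℤ, tp k ∈ S := by
  intro k
  induction k using Int.induction_on with
  | zero =>
    have : tp 0 = 1 := by rw [tp, LaurentPolynomial.T_zero, map_one]
    rw [this]; exact one_mem S
  | succ n ih =>
    have : tp (n + 1) = tp n * tR := tp_mul n 1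
    rw [this]; exact mul_mem ih h1
  | pred n ih =>
    have : tp (-n - 1) = tp (-n) * tInv := by
      rw [sub_eq_add_neg]; exact tp_mul (-n) (-1)
    rw [this]; exact mul_mem ih h2

lemma hTop : Algebra.adjoin ℂ ({tR, tInv, uR} : Set R3) = ⊤ := by
  rw [eq_top_iff]
  rintro x -
  obtain ⟨f, rfl⟩ := AdjoinRoot.mk_surjective x
  set S := Algebra.adjoin ℂ ({tR, tInv, uR} : Set R3) with hS
  have htR : tR ∈ S := Algebra.subset_adjoin (by simp)
  have htInv : tInv ∈ S := Algebra.subset_adjoin (by simp)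
  have huR : uR ∈ S := Algebra.subset_adjoin (by simp)
  have hof : ∀ g : LaurentPolynomial ℂ, AdjoinRoot.of threePoly g ∈ S := by
    intro g
    induction g using LaurentPolynomial.induction_on' with
    | add p q hp hq => rw [map_add]; exact add_mem hp hq
    | C_mul_T n c =>
      rw [map_mul]
      apply mul_mem
      · have hc : AdjoinRoot.of threePoly (LaurentPolynomial.C c) = algebraMap ℂ R3 c := rfl
        rw [hc]; exact Subalgebra.algebraMap_mem S c
      · exact tp_mem htR htInv n
  induction f using Polynomial.induction_on' with
  | add p q hp hq => rw [map_add]; exact add_mem hp hq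
  | monomial n c =>
    rw [← Polynomial.C_mul_X_pow_eq_monomial, map_mul, map_pow]
    apply mul_mem
    · exact hof c
    · apply pow_mem
      rw [AdjoinRoot.mk_X]
      exact huR

include ha in
lemma hrange : (psi a ha).range = Algebra.adjoin ℂ {Tz a, (Tz a)⁻¹, Uz a} := by
  rw [← Algebra.map_top, ← hTop, AlgHom.map_adjoin]
  congr 1
  rw [Set.image_insert_eq, Set.image_insert_eq, Set.image_singleton]
  rw [show psi a ha tR = Tz a from by rw [tR, psi_tp, zpow_one],
    show psi a ha tInv = (Tz a)⁻¹ from by rw [tInv, psi_tp]; exact zpow_neg_one _,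
    psi_u]

def Bb : Subalgebra ℂ (RatFunc ℂ) :=
  Algebra.adjoin ℂ {RatFunc.X, (RatFunc.X - RatFunc.C a)⁻¹, (RatFunc.X + RatFunc.C a)⁻¹}

def Cg : Subalgebra ℂ (RatFunc ℂ) := Algebra.adjoin ℂ {Tz a, (Tz a)⁻¹, Uz a}

lemma zpow_mem' {S : Subalgebra ℂ (RatFunc ℂ)} {x : RatFunc ℂ} (hx : x ∈ S) (hxi : x⁻¹ ∈ S) :
    ∀ k : ℤ, x ^ k ∈ S
  | Int.ofNat n => by
    rw [Int.ofNat_eq_natCast, zpow_natCast]; exact pow_mem hx n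
  | Int.negSucc n => by
    rw [zpow_negSucc, ← inv_pow]; exact pow_mem hxi (n+1)

lemma sq_diff : RatFunc.X^2 - RatFunc.C (a^2) = Wm a * Wp a := by
  rw [Wm, Wp, map_pow]; ring

lemma hCmem (S : Subalgebra ℂ (RatFunc ℂ)) (c : ℂ) : RatFunc.C c ∈ S := by
  rw [← RatFunc.algebraMap_eq_C]
  exact Subalgebra.algebraMap_mem S c

lemma hXAa : RatFunc.X ∈ Aa a := by
  have h : RatFunc.X = RatFunc.X * (RatFunc.X^2 - RatFunc.C (a^2)) ^ (0:ℤ) := by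
    rw [zpow_zero, mul_one]
  rw [h]
  exact Algebra.subset_adjoin ⟨0, Or.inr rfl⟩

lemma hgenAa (k : ℤ) : (RatFunc.X^2 - RatFunc.C (a^2)) ^ k ∈ Aa a :=
  Algebra.subset_adjoin ⟨k, Or.inl rfl⟩

lemma hAa_le_B : Aa a ≤ Bb a := by
  apply Algebra.adjoin_le
  have hXB : RatFunc.X ∈ Bb a := Algebra.subset_adjoin (by simp)
  have hWmiB : (Wm a)⁻¹ ∈ Bb a := Algebra.subset_adjoin (by right; left; rfl)
  have hWpiB : (Wp a)⁻¹ ∈ Bb a := Algebra.subset_adjoin (by right; right; rfl)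
  have hWmB : Wm a ∈ Bb a := by
    rw [Wm]; exact sub_mem hXB (hCmem _ a)
  have hWpB : Wp a ∈ Bb a := by
    rw [Wp]; exact add_mem hXB (hCmem _ a)
  have hzp : ∀ k : ℤ, (RatFunc.X^2 - RatFunc.C (a^2)) ^ k ∈ Bb a := by
    intro k
    rw [sq_diff, mul_zpow]
    exact mul_mem (zpow_mem' hWmB hWmiB k) (zpow_mem' hWpB hWpiB k)
  rintro x ⟨k, hx | hx⟩ <;> subst hx
  · exact hzp k
  · exact mul_mem hXB (hzp k)

include ha in
lemma hB_le_Cg : Bb a ≤ Cg a := by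
  apply Algebra.adjoin_le
  have hT : Tz a ∈ Cg a := Algebra.subset_adjoin (by simp)
  have hTi : (Tz a)⁻¹ ∈ Cg a := Algebra.subset_adjoin (by right; left; rfl)
  have hU : Uz a ∈ Cg a := Algebra.subset_adjoin (by right; right; rfl)
  rintro x (hx | hx | hx) <;> subst hx
  · rw [← hz a ha]
    exact mul_mem (hCmem _ a) (add_mem (add_mem (one_mem _) hT) hU)
  · show (Wm a)⁻¹ ∈ Cg a
    rw [← hinvm a ha]
    exact mul_mem (hCmem _ _) (sub_mem (mul_mem hTi hU) (one_mem _))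
  · show (Wp a)⁻¹ ∈ Cg a
    rw [← hinvp a ha]
    exact mul_mem (hCmem _ _) (sub_mem (add_mem hT (ofNat_mem _ 2)) hU)

include ha in
lemma hprod_ne : RatFunc.X^2 - RatFunc.C (a^2) ≠ 0 := by
  rw [sq_diff]; exact mul_ne_zero (hWm a) (hWp a)

include ha in
lemma hTz_Aa : RatFunc.C (2*a) * Tz a = (RatFunc.X - RatFunc.C a)^3
    * (RatFunc.X^2 - RatFunc.C (a^2)) ^ (-1:ℤ) := by
  rw [zpow_neg_one, eq_mul_inv_iff_mul_eq₀ (hprod_ne a ha), sq_diff, hC2,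
    show RatFunc.X - RatFunc.C a = Wm a from rfl, Tz]
  have hd := hDz a ha
  have hca := hCa a ha
  field_simp [hca]
  simp only [Dz, Wm, Wp, hC2, hC3, map_ofNat]
  first
  | ring
  | (field_simp [hca]; ring)

include ha in
lemma hTzInv_Aa : (Tz a)⁻¹ = RatFunc.C (2*a) * (RatFunc.X + RatFunc.C a)^3
    * (RatFunc.X^2 - RatFunc.C (a^2)) ^ (-2:ℤ) := by
  rw [show ((-2:ℤ)) = -((2:ℕ):ℤ) from rfl, zpow_neg, zpow_natCast,
    eq_mul_inv_iff_mul_eq₀ (pow_ne_zero 2 (hprod_ne a ha)), sq_diff, hC2,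
    show RatFunc.X + RatFunc.C a = Wp a from rfl, Tz, inv_div]
  have hd := hDz a ha
  have hca := hCa a ha
  have hwm := hWm a
  field_simp
  simp only [Dz, Wm, Wp, hC2, hC3, map_ofNat]
  ring

include ha in
lemma hUz_Aa : RatFunc.C (2*a) * Uz a = ((RatFunc.X - RatFunc.C a)^2
    * (RatFunc.X + RatFunc.C (3*a))) * (RatFunc.X^2 - RatFunc.C (a^2)) ^ (-1:ℤ) := by
  rw [zpow_neg_one, eq_mul_inv_iff_mul_eq₀ (hprod_ne a ha), sq_diff, hC2,
    show RatFunc.X - RatFunc.C a = Wm a from rfl, Uz]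
  have hd := hDz a ha
  have hca := hCa a ha
  field_simp [hca]
  simp only [Dz, Wm, Wp, hC2, hC3, map_ofNat]
  first
  | ring
  | (field_simp [hca]; ring)

include ha in
lemma hCg_le_Aa : Cg a ≤ Aa a := by
  apply Algebra.adjoin_le
  have hX := hXAa a
  have hCm : ∀ c : ℂ, RatFunc.C c ∈ Aa a := hCmem _
  have h2a : (2*a) ≠ 0 := by simpa using ha
  have hrecover : ∀ y : RatFunc ℂ, y = RatFunc.C ((2*a)⁻¹) * (RatFunc.C (2*a) * y) := by
    intro y
    rw [← mul_assoc, ← map_mul, inv_mul_cancel₀ h2a, map_one, one_mul]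
  rintro x (hx | hx | hx) <;> subst hx
  · rw [hrecover (Tz a), hTz_Aa a ha]
    exact mul_mem (hCm _) (mul_mem (pow_mem (sub_mem hX (hCm a)) 3) (hgenAa a (-1)))
  · rw [hTzInv_Aa a ha]
    exact mul_mem (mul_mem (hCm _) (pow_mem (add_mem hX (hCm a)) 3)) (hgenAa a (-2))
  · rw [hrecover (Uz a), hUz_Aa a ha]
    exact mul_mem (hCm _) (mul_mem (mul_mem (pow_mem (sub_mem hX (hCm a)) 2)
      (add_mem hX (hCm _))) (hgenAa a (-1)))

include ha in
lemma hAaB : Aa a = Bb a :=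
  le_antisymm (hAa_le_B a) ((hB_le_Cg a ha).trans (hCg_le_Aa a ha))

include ha in
lemma hAaCg : Aa a = Cg a :=
  le_antisymm ((hAa_le_B a).trans (hB_le_Cg a ha)) (hCg_le_Aa a ha)

include ha in
lemma hrange' : (psi a ha).range = Aa a := by
  rw [hrange a ha, hAaCg a ha, Cg]

include ha in
lemma psi_val1 : psi a ha (a • (1 + tR + uR)) = RatFunc.X := by
  rw [map_smul, map_add, map_add, map_one, tR, psi_tp, psi_u, zpow_one]
  rw [Algebra.smul_def, RatFunc.algebraMap_eq_C]
  exact hz a ha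

include ha in
lemma psi_val2 : psi a ha ((4 * a)⁻¹ • (tR + 2 - uR)) = (RatFunc.X + RatFunc.C a)⁻¹ := by
  rw [map_smul, map_sub, map_add, tR, psi_tp, psi_u, zpow_one]
  rw [Algebra.smul_def, RatFunc.algebraMap_eq_C]
  rw [map_ofNat]
  exact (show (Wp a)⁻¹ = _ from (hinvp a ha).symm) ▸ (hinvp a ha)

include ha in
lemma psi_val3 : psi a ha ((4 * a)⁻¹ • (tInv * uR - 1)) = (RatFunc.X - RatFunc.C a)⁻¹ := by
  rw [map_smul, map_sub, map_mul, map_one, tInv, psi_tp, psi_u]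
  rw [Algebra.smul_def, RatFunc.algebraMap_eq_C]
  rw [zpow_neg_one]
  exact hinvm a ha

end Three

open Three in
/-- For any nonzero `a ∈ ℂ`, the subalgebra `A_a` equals `ℂ[z, (z-a)⁻¹, (z+a)⁻¹]`, and `A_a` is
isomorphic as a `ℂ`-algebra to `R` via `z ↦ a(1 + t + u)`, `(z+a)⁻¹ ↦ (t + 2 - u)/(4a)`,
`(z-a)⁻¹ ↦ (t⁻¹u - 1)/(4a)`. -/
theorem stmt_1 (a : ℂ) (ha : a ≠ 0) :
    Aa a = Algebra.adjoin ℂ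
        {RatFunc.X, (RatFunc.X - RatFunc.C a)⁻¹, (RatFunc.X + RatFunc.C a)⁻¹} ∧
    ∃ e : Aa a ≃ₐ[ℂ] R3,
      (↑(e.symm (a • (1 + tR + uR))) : RatFunc ℂ) = RatFunc.X ∧
      (↑(e.symm ((4 * a)⁻¹ • (tR + 2 - uR))) : RatFunc ℂ) = (RatFunc.X + RatFunc.C a)⁻¹ ∧
      (↑(e.symm ((4 * a)⁻¹ • (tInv * uR - 1))) : RatFunc ℂ) = (RatFunc.X - RatFunc.C a)⁻¹ := by
  constructor
  · exact hAaB a ha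
  · set E : R3 ≃ₐ[ℂ] Aa a :=
      (AlgEquiv.ofInjective (psi a ha) (psi_inj a ha)).trans
        (Subalgebra.equivOfEq _ _ (hrange' a ha)) with hE
    refine ⟨E.symm, ?_, ?_, ?_⟩
    · rw [AlgEquiv.symm_symm]
      have : ((E (a • (1 + tR + uR)) : Aa a) : RatFunc ℂ) = psi a ha (a • (1 + tR + uR)) := rfl
      rw [this, psi_val1 a ha]
    · rw [AlgEquiv.symm_symm]
      have : ((E ((4 * a)⁻¹ • (tR + 2 - uR)) : Aa a) : RatFunc ℂ)
          = psi a ha ((4 * a)⁻¹ • (tR + 2 - uR)) := rfl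
      rw [this, psi_val2 a ha]
    · rw [AlgEquiv.symm_symm]
      have : ((E ((4 * a)⁻¹ • (tInv * uR - 1)) : Aa a) : RatFunc ℂ)
          = psi a ha ((4 * a)⁻¹ • (tInv * uR - 1)) := rfl
      rw [this, psi_val3 a ha]
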